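/- Let A be a C-hyperideal of a commutative multiplicative hyperring G and S an MCS with A ∩ S = ∅. If A is a weakly quasi S-primary hyperideal of G and the zero hyperideal ⟨0⟩ is a quasi S-primary C-hyperideal of G, then rad(A) is an S-prime hyperideal of G. -/

import Mathlib

open Set

/-- A commutative multiplicative hyperring: a commutative additive group with a
commutative, associative hyperoperation `hmul` satisfying `(-a)∘b = -(a∘b)`,
weak distributivity, and having an identity element `e` with `a ∈ e∘a`. -/
class MulHyperring (G : Type*) extends AddCommGroup G where
  hmul : G → G → Set G
  hmul_nonempty : ∀ a b : G, (hmul a b).Nonempty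
  hmul_comm : ∀ a b : G, hmul a b = hmul b a
  hmul_assoc : ∀ a b c : G, (⋃ x ∈ hmul a b, hmul x c) = ⋃ x ∈ hmul b c, hmul a x
  neg_hmul : ∀ a b : G, hmul (-a) b = (fun x => -x) '' (hmul a b)
  hmul_add : ∀ a b c : G,
    hmul a (b + c) ⊆ {x | ∃ u ∈ hmul a b, ∃ v ∈ hmul a c, x = u + v}
  e : G
  e_mem : ∀ a : G, a ∈ hmul e a

namespace MulHyperring

variable {G : Type*} [MulHyperring G]

/-- Hyperproduct of an element with a set: `a ∘ B = ⋃ b ∈ B, a ∘ b`. -/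
def smulSet (a : G) (B : Set G) : Set G := ⋃ b ∈ B, hmul a b

/-- Hyperproduct of two sets. -/
def setMul (A B : Set G) : Set G := ⋃ a ∈ A, ⋃ b ∈ B, hmul a b

/-- Hyperproduct `a₁ ∘ a₂ ∘ ⋯ ∘ aₙ` of a (nonempty) list of elements. -/
def hProd : List G → Set G
  | [] => ∅
  | [a] => {a}
  | a :: b :: l => smulSet a (hProd (b :: l))

/-- `aⁿ` as a hyperproduct. -/
def hPow (a : G) (n : ℕ) : Set G := hProd (List.replicate n a)

/-- `A` is a hyperideal of `G`. -/
def IsHyperideal (A : Set G) : Prop :=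
  A.Nonempty ∧ (∀ x ∈ A, ∀ y ∈ A, x - y ∈ A) ∧ ∀ r : G, ∀ x ∈ A, hmul r x ⊆ A

/-- `A` is a `C`-hyperideal: any finite hyperproduct meeting `A` is contained in `A`. -/
def IsCHyperideal (A : Set G) : Prop :=
  IsHyperideal A ∧ ∀ l : List G, l ≠ [] → (hProd l ∩ A).Nonempty → hProd l ⊆ A

/-- The radical of a (C-)hyperideal: `{a | aⁿ ⊆ A for some n ≥ 1}`. -/
def rad (A : Set G) : Set G := {a | ∃ n : ℕ, 1 ≤ n ∧ hPow a n ⊆ A}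

/-- The hyperideal generated by a set. -/
def idealGen (X : Set G) : Set G := ⋂₀ {A | IsHyperideal A ∧ X ⊆ A}

/-- The hyperideal product of two hyperideals. -/
def idealMul (A B : Set G) : Set G := idealGen (setMul A B)

/-- Multiplicative closed subset. -/
def IsMCS (S : Set G) : Prop :=
  e ∈ S ∧ ∀ s₁ ∈ S, ∀ s₂ ∈ S, (hmul s₁ s₂ ∩ S).Nonempty

/-- Prime hyperideal. -/
def IsPrime (P : Set G) : Prop :=
  IsHyperideal P ∧ P ≠ univ ∧ ∀ x y : G, hmul x y ⊆ P → x ∈ P ∨ y ∈ P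

/-- `S`-prime hyperideal. -/
def IsSPrime (S A : Set G) : Prop :=
  IsHyperideal A ∧ A ∩ S = ∅ ∧
    ∃ t ∈ S, ∀ u v : G, hmul u v ⊆ A → hmul t u ⊆ A ∨ hmul t v ⊆ A

/-- `S`-primary hyperideal. -/
def IsSPrimary (S A : Set G) : Prop :=
  IsHyperideal A ∧ A ∩ S = ∅ ∧
    ∃ t ∈ S, ∀ u v : G, hmul u v ⊆ A → hmul t u ⊆ A ∨ hmul t v ⊆ rad A

/-- Quasi `S`-primary hyperideal. -/
def IsQuasiSPrimary (S A : Set G) : Prop :=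
  IsHyperideal A ∧ A ∩ S = ∅ ∧
    ∃ t ∈ S, ∀ u v : G, hmul u v ⊆ A → hmul t u ⊆ rad A ∨ hmul t v ⊆ rad A

/-- Weakly quasi `S`-primary hyperideal. -/
def IsWeaklyQuasiSPrimary (S A : Set G) : Prop :=
  IsHyperideal A ∧ A ∩ S = ∅ ∧
    ∃ t ∈ S, ∀ u v : G, 0 ∉ hmul u v → hmul u v ⊆ A →
      hmul t u ⊆ rad A ∨ hmul t v ⊆ rad A

/-- Strongly quasi `S`-primary hyperideal. -/
def IsStronglyQuasiSPrimary (S A : Set G) : Prop :=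
  IsHyperideal A ∧ A ∩ S = ∅ ∧
    ∃ t ∈ S, ∀ u v : G, hmul u v ⊆ A →
      smulSet t (hPow u 2) ⊆ A ∨ hmul t v ⊆ rad A

/-- The residual `(B : x) = {y | y ∘ x ⊆ B}`. -/
def colon (B : Set G) (x : G) : Set G := {y | hmul y x ⊆ B}

end MulHyperring


namespace MulHyperring

variable {G : Type*} [MulHyperring G]

set_option linter.unusedSectionVars false

/-! ### Basic lemmas about `setMul`, `smulSet`, `hProd` -/

lemma mem_setMul {A B : Set G} {z : G} :
    z ∈ setMul A B ↔ ∃ a ∈ A, ∃ b ∈ B, z ∈ hmul a b := by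
  simp [setMul]

lemma mem_smulSet {a : G} {B : Set G} {z : G} :
    z ∈ smulSet a B ↔ ∃ b ∈ B, z ∈ hmul a b := by
  simp [smulSet]

lemma smulSet_eq_setMul (a : G) (B : Set G) : smulSet a B = setMul {a} B := by
  simp [smulSet, setMul]

lemma setMul_comm (A B : Set G) : setMul A B = setMul B A := by
  ext z
  simp only [mem_setMul]
  constructor <;> rintro ⟨a, ha, b, hb, hz⟩ <;>
    exact ⟨b, hb, a, ha, by rwa [hmul_comm]⟩

lemma setMul_assoc (A B C : Set G) : setMul (setMul A B) C = setMul A (setMul B C) := by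
  ext z
  simp only [mem_setMul]
  constructor
  · rintro ⟨x, ⟨a, ha, b, hb, hx⟩, c, hc, hz⟩
    have h1 : z ∈ ⋃ x ∈ hmul a b, hmul x c := Set.mem_biUnion hx hz
    rw [hmul_assoc] at h1
    obtain ⟨y, hy, hz'⟩ := Set.mem_iUnion₂.mp h1
    exact ⟨a, ha, y, ⟨b, hb, c, hc, hy⟩, hz'⟩
  · rintro ⟨a, ha, y, ⟨b, hb, c, hc, hy⟩, hz⟩
    have h1 : z ∈ ⋃ y ∈ hmul b c, hmul a y := Set.mem_biUnion hy hz
    rw [← hmul_assoc] at h1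
    obtain ⟨x, hx, hz'⟩ := Set.mem_iUnion₂.mp h1
    exact ⟨x, ⟨a, ha, b, hb, hx⟩, c, hc, hz'⟩

lemma setMul_mono {A A' B B' : Set G} (hA : A ⊆ A') (hB : B ⊆ B') :
    setMul A B ⊆ setMul A' B' := by
  intro z hz
  obtain ⟨a, ha, b, hb, hz⟩ := mem_setMul.mp hz
  exact mem_setMul.mpr ⟨a, hA ha, b, hB hb, hz⟩

lemma hmul_eq_setMul (a b : G) : hmul a b = setMul {a} {b} := by simp [setMul]

lemma hProd_singleton (a : G) : hProd [a] = {a} := rfl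

lemma hProd_cons {l : List G} (hl : l ≠ []) (a : G) :
    hProd (a :: l) = setMul {a} (hProd l) := by
  obtain ⟨b, l', rfl⟩ := List.exists_cons_of_ne_nil hl
  rw [show hProd (a :: b :: l') = smulSet a (hProd (b :: l')) from rfl, smulSet_eq_setMul]

lemma hProd_pair (a b : G) : hProd [a, b] = hmul a b := by
  rw [hProd_cons (by simp) a, hProd_singleton, ← hmul_eq_setMul]

lemma hProd_append {l₁ l₂ : List G} (h₁ : l₁ ≠ []) (h₂ : l₂ ≠ []) :
    hProd (l₁ ++ l₂) = setMul (hProd l₁) (hProd l₂) := by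
  induction l₁ with
  | nil => simp at h₁
  | cons a l ih =>
    cases l with
    | nil =>
      rw [List.singleton_append, hProd_cons h₂ a, hProd_singleton]
    | cons b l' =>
      rw [List.cons_append, hProd_cons (by simp [h₂]) a, ih (by simp), ← setMul_assoc,
        ← hProd_cons (by simp) a]

lemma hProd_nonempty {l : List G} (hl : l ≠ []) : (hProd l).Nonempty := by
  induction l with
  | nil => simp at hl
  | cons a l ih =>
    cases l with
    | nil => exact ⟨a, rfl⟩
    | cons b l' =>
      obtain ⟨w, hw⟩ := ih (by simp)
      obtain ⟨z, hz⟩ := hmul_nonempty a w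
      exact ⟨z, by rw [hProd_cons (by simp) a]; exact mem_setMul.mpr ⟨a, rfl, w, hw, hz⟩⟩

lemma hProd_perm {l l' : List G} (h : l.Perm l') : hProd l = hProd l' := by
  induction h with
  | nil => rfl
  | cons a h ih =>
    rename_i l₁ l₂
    rcases eq_or_ne l₁ [] with rfl | h₁
    · rw [h.nil_eq]
    · have h₂ : l₂ ≠ [] := fun hn => h₁ (by subst hn; exact h.eq_nil)
      rw [hProd_cons h₁, hProd_cons h₂, ih]
  | swap a b l =>
    cases l with
    | nil => rw [hProd_pair, hProd_pair, hmul_comm]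
    | cons c l' =>
      rw [hProd_cons (by simp) b, hProd_cons (by simp) a,
        hProd_cons (by simp) a, hProd_cons (by simp) b,
        ← setMul_assoc, ← setMul_assoc, setMul_comm {b} {a}]
  | trans _ _ ih₁ ih₂ => rw [ih₁, ih₂]

lemma hPow_def (a : G) (n : ℕ) : hPow a n = hProd (List.replicate n a) := rfl

lemma replicate_ne_nil' {a : G} {n : ℕ} (hn : 1 ≤ n) : List.replicate n a ≠ [] := by
  intro h
  have := congrArg List.length h
  simp at this
  omega

lemma hPow_one (a : G) : hPow a 1 = {a} := rfl

lemma hPow_succ {a : G} {n : ℕ} (hn : 1 ≤ n) : hPow a (n + 1) = smulSet a (hPow a n) := by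
  obtain ⟨m, rfl⟩ : ∃ m, n = m + 1 := ⟨n - 1, by omega⟩
  rfl

lemma hPow_succ' {a : G} {n : ℕ} (hn : 1 ≤ n) :
    hPow a (n + 1) = setMul {a} (hPow a n) := by
  rw [hPow_succ hn, smulSet_eq_setMul]

/-! ### Repeated lists -/

/-- `l` repeated `k` times. -/
def repList (k : ℕ) (l : List G) : List G :=
  match k with
  | 0 => []
  | k + 1 => l ++ repList k l

lemma repList_ne_nil {k : ℕ} (hk : 1 ≤ k) {l : List G} (hl : l ≠ []) :
    repList k l ≠ [] := by
  obtain ⟨m, rfl⟩ : ∃ m, k = m + 1 := ⟨k - 1, by omega⟩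
  show l ++ repList m l ≠ []
  simp [hl]

lemma repList_replicate (k n : ℕ) (a : G) :
    repList k (List.replicate n a) = List.replicate (k * n) a := by
  induction k with
  | zero => simp [repList]
  | succ m ih =>
    show List.replicate n a ++ repList m (List.replicate n a) = _
    rw [ih, ← List.replicate_add]
    congr 1
    ring

lemma repList_pair_perm (k : ℕ) (u v : G) :
    (repList k [u, v]).Perm (List.replicate k u ++ List.replicate k v) := by
  induction k with
  | zero => simp [repList]
  | succ m ih =>
    show (u :: v :: repList m [u, v]).Perm _
    rw [List.replicate_succ, List.replicate_succ, List.cons_append]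
    refine ((ih.cons v).cons u).trans ?_
    exact (List.perm_middle.symm.cons u)

lemma pow_subset_of_mem {l : List G} (hl : l ≠ []) {w : G} (hw : w ∈ hProd l) :
    ∀ k, 1 ≤ k → hPow w k ⊆ hProd (repList k l)
  | 1, _ => by
    show hPow w 1 ⊆ hProd (l ++ [])
    rw [List.append_nil, hPow_one]
    exact Set.singleton_subset_iff.mpr hw
  | k + 2, _ => by
    have ih := pow_subset_of_mem hl hw (k + 1) (by omega)
    rw [hPow_succ' (by omega)]
    show setMul {w} (hPow w (k + 1)) ⊆ hProd (l ++ repList (k + 1) l)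
    rw [hProd_append hl (repList_ne_nil (by omega) hl)]
    exact setMul_mono (Set.singleton_subset_iff.mpr hw) ih

/-! ### Hyperideal basics -/

lemma IsHyperideal.zero_mem {A : Set G} (hA : IsHyperideal A) : 0 ∈ A := by
  obtain ⟨⟨x, hx⟩, hsub, _⟩ := hA
  simpa using hsub x hx x hx

lemma IsHyperideal.neg_mem {A : Set G} (hA : IsHyperideal A) {x : G} (hx : x ∈ A) :
    -x ∈ A := by
  simpa using hA.2.1 0 hA.zero_mem x hx

lemma IsHyperideal.add_mem {A : Set G} (hA : IsHyperideal A) {x y : G} (hx : x ∈ A)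
    (hy : y ∈ A) : x + y ∈ A := by
  simpa [sub_neg_eq_add] using hA.2.1 x hx (-y) (hA.neg_mem hy)

lemma IsHyperideal.setMul_subset {A B C : Set G} (hA : IsHyperideal A) (hC : C ⊆ A) :
    setMul B C ⊆ A := by
  intro z hz
  obtain ⟨b, _, c, hc, hz⟩ := mem_setMul.mp hz
  exact hA.2.2 b c (hC hc) hz

lemma pow_subset_of_le {A : Set G} (hA : IsHyperideal A) {x : G} {m k : ℕ} (hm : 1 ≤ m)
    (hmk : m ≤ k) (h : hPow x m ⊆ A) : hPow x k ⊆ A := by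
  rcases eq_or_lt_of_le hmk with rfl | hlt
  · exact h
  · have hrep : List.replicate k x = List.replicate (k - m) x ++ List.replicate m x := by
      rw [← List.replicate_add]
      congr 1
      omega
    have heq : hPow x k = setMul (hPow x (k - m)) (hPow x m) := by
      rw [hPow_def, hrep, hProd_append (replicate_ne_nil' (by omega)) (replicate_ne_nil' hm)]
      rfl
    rw [heq]
    exact hA.setMul_subset h

/-! ### rad lemmas -/

lemma rad_mono {A B : Set G} (h : A ⊆ B) : rad A ⊆ rad B := by
  rintro a ⟨n, hn, ha⟩
  exact ⟨n, hn, ha.trans h⟩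

lemma rad_rad {A : Set G} (hA : IsCHyperideal A) {z : G} {n : ℕ} (hn : 1 ≤ n)
    (h : hPow z n ⊆ rad A) : z ∈ rad A := by
  obtain ⟨w, hw⟩ := hProd_nonempty (replicate_ne_nil' hn (a := z))
  obtain ⟨k, hk, hwk⟩ := h hw
  have h1 : hPow w k ⊆ hPow z (k * n) := by
    have := pow_subset_of_mem (replicate_ne_nil' hn) hw k hk
    rwa [repList_replicate] at this
  have hkn : 1 ≤ k * n := Nat.one_le_iff_ne_zero.mpr (Nat.mul_ne_zero (by omega) (by omega))
  have hmeet : (hProd (List.replicate (k * n) z) ∩ A).Nonempty := by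
    obtain ⟨y, hy⟩ := hProd_nonempty (replicate_ne_nil' hk (a := w))
    exact ⟨y, h1 hy, hwk hy⟩
  exact ⟨k * n, hkn, hA.2 _ (replicate_ne_nil' hkn) hmeet⟩

lemma rad_c {A : Set G} (hA : IsCHyperideal A) {l : List G} (hl : l ≠ [])
    (hmeet : (hProd l ∩ rad A).Nonempty) : hProd l ⊆ rad A := by
  obtain ⟨w₀, hw₀l, k, hk, hw₀k⟩ := hmeet
  intro w hw
  have h1 : hPow w k ⊆ hProd (repList k l) := pow_subset_of_mem hl hw k hk
  have h0 : hPow w₀ k ⊆ hProd (repList k l) := pow_subset_of_mem hl hw₀l k hk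
  have hm : (hProd (repList k l) ∩ A).Nonempty := by
    obtain ⟨y, hy⟩ := hProd_nonempty (replicate_ne_nil' hk (a := w₀))
    exact ⟨y, h0 hy, hw₀k hy⟩
  exact ⟨k, hk, h1.trans (hA.2 _ (repList_ne_nil hk hl) hm)⟩

/-! ### Finite sums -/

/-- The set of finite (nonempty) sums of elements of `U`. -/
def sums (U : Set G) : Set G :=
  {w | ∃ l : List G, l ≠ [] ∧ (∀ a ∈ l, a ∈ U) ∧ l.sum = w}

lemma subset_sums (U : Set G) : U ⊆ sums U := fun a ha =>
  ⟨[a], by simp, by simpa using ha, by simp⟩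

lemma sums_mono {U V : Set G} (h : U ⊆ V) : sums U ⊆ sums V := by
  rintro w ⟨l, hl, hm, rfl⟩
  exact ⟨l, hl, fun a ha => h (hm a ha), rfl⟩

lemma add_mem_sums {U : Set G} {a b : G} (ha : a ∈ sums U) (hb : b ∈ sums U) :
    a + b ∈ sums U := by
  obtain ⟨l₁, hl₁, hm₁, rfl⟩ := ha
  obtain ⟨l₂, hl₂, hm₂, rfl⟩ := hb
  exact ⟨l₁ ++ l₂, by simp [hl₁], by
    intro x hx
    rcases List.mem_append.mp hx with h | h
    exacts [hm₁ x h, hm₂ x h], by simp⟩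

lemma sum_mem_sums {V : Set G} :
    ∀ l : List G, l ≠ [] → (∀ a ∈ l, a ∈ sums V) → l.sum ∈ sums V
  | [a], _, h => by simpa using h a (by simp)
  | a :: b :: l, _, h => by
    rw [List.sum_cons]
    exact add_mem_sums (h a (by simp))
      (sum_mem_sums (b :: l) (by simp) fun x hx => h x (by simp [hx]))

lemma sums_flatten {U V : Set G} (h : U ⊆ sums V) : sums U ⊆ sums V := by
  rintro w ⟨l, hl, hm, rfl⟩
  exact sum_mem_sums l hl fun a ha => h (hm a ha)

lemma sums_subset_ideal {A U : Set G} (hA : IsHyperideal A) (h : U ⊆ A) : sums U ⊆ A := by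
  rintro w ⟨l, hl, hm, rfl⟩
  clear hl
  induction l with
  | nil => simpa using hA.zero_mem
  | cons a l ih =>
    rw [List.sum_cons]
    exact hA.add_mem (h (hm a (by simp))) (ih fun x hx => hm x (by simp [hx]))

lemma smulSet_mono {a : G} {B B' : Set G} (h : B ⊆ B') : smulSet a B ⊆ smulSet a B' := by
  intro z hz
  obtain ⟨b, hb, hz⟩ := mem_smulSet.mp hz
  exact mem_smulSet.mpr ⟨b, h hb, hz⟩

lemma hmul_sum_subset {a : G} {U : Set G} :
    ∀ l : List G, l ≠ [] → (∀ b ∈ l, b ∈ U) → hmul a l.sum ⊆ sums (smulSet a U)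
  | [b], _, h => by
    simp only [List.sum_cons, List.sum_nil, add_zero]
    intro z hz
    exact subset_sums _ (mem_smulSet.mpr ⟨b, h b (by simp), hz⟩)
  | b :: c :: l, _, h => by
    rw [List.sum_cons]
    intro z hz
    obtain ⟨u, hu, v, hv, rfl⟩ := hmul_add a b (c :: l).sum hz
    refine add_mem_sums (subset_sums _ (mem_smulSet.mpr ⟨b, h b (by simp), hu⟩)) ?_
    exact hmul_sum_subset (c :: l) (by simp) (fun x hx => h x (by simp [hx])) hv

lemma smulSet_sums (a : G) (U : Set G) : smulSet a (sums U) ⊆ sums (smulSet a U) := by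
  intro z hz
  obtain ⟨w, ⟨l, hl, hm, rfl⟩, hz⟩ := mem_smulSet.mp hz
  exact hmul_sum_subset l hl hm hz

lemma smulSet_add_subset (x y : G) (V : Set G) :
    smulSet (x + y) V ⊆ sums (smulSet x V ∪ smulSet y V) := by
  intro z hz
  obtain ⟨v, hv, hz⟩ := mem_smulSet.mp hz
  rw [hmul_comm] at hz
  obtain ⟨u, hu, w, hw, rfl⟩ := hmul_add v x y hz
  refine add_mem_sums (subset_sums _ (Or.inl ?_)) (subset_sums _ (Or.inr ?_))
  · exact mem_smulSet.mpr ⟨v, hv, by rwa [hmul_comm]⟩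
  · exact mem_smulSet.mpr ⟨v, hv, by rwa [hmul_comm]⟩

/-! ### Binomial expansion -/

/-- All hyperproducts of length-`N` lists with entries in `{x, y}`. -/
def mix (x y : G) (N : ℕ) : Set G :=
  {w | ∃ l : List G, l.length = N ∧ (∀ a ∈ l, a = x ∨ a = y) ∧ w ∈ hProd l}

lemma smulSet_mix {x y c : G} (hc : c = x ∨ c = y) {N : ℕ} (hN : 1 ≤ N) :
    smulSet c (mix x y N) ⊆ mix x y (N + 1) := by
  intro z hz
  obtain ⟨w, ⟨l, hlen, hxy, hw⟩, hz⟩ := mem_smulSet.mp hz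
  have hl : l ≠ [] := by
    intro h
    rw [h] at hlen
    simp at hlen
    omega
  refine ⟨c :: l, by simp [hlen], ?_, ?_⟩
  · intro a ha
    rcases List.mem_cons.mp ha with rfl | ha
    exacts [hc, hxy a ha]
  · rw [hProd_cons hl c]
    exact mem_setMul.mpr ⟨c, rfl, w, hw, hz⟩

lemma binom (x y : G) : ∀ N, 1 ≤ N → hPow (x + y) N ⊆ sums (mix x y N)
  | 1, _ => by
    rw [hPow_one]
    intro z hz
    rw [Set.mem_singleton_iff] at hz
    subst hz
    refine ⟨[x, y], by simp, ?_, by simp⟩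
    intro a ha
    have hax : a = x ∨ a = y := by simpa using ha
    refine ⟨[a], by simp, ?_, by rw [hProd_singleton]; rfl⟩
    intro b hb
    simp only [List.mem_cons, List.not_mem_nil, or_false] at hb
    subst hb
    exact hax
  | N + 2, _ => by
    have ih := binom x y (N + 1) (by omega)
    rw [hPow_succ (by omega)]
    refine (smulSet_mono ih).trans ?_
    refine (smulSet_sums _ _).trans (sums_flatten ?_)
    refine (smulSet_add_subset x y _).trans (sums_mono ?_)
    exact Set.union_subset (smulSet_mix (Or.inl rfl) (by omega))
      (smulSet_mix (Or.inr rfl) (by omega))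

lemma hProd_subset_of_sublist {A : Set G} (hA : IsCHyperideal A) {x : G} {m : ℕ}
    (hm : 1 ≤ m) (hx : hPow x m ⊆ A) {l : List G}
    (hsub : List.Sublist (List.replicate m x) l) : hProd l ⊆ A := by
  obtain ⟨l', hperm⟩ := hsub.exists_perm_append
  rw [hProd_perm hperm]
  cases l' with
  | nil => simpa [hPow_def] using hx
  | cons b l'' =>
    rw [hProd_append (replicate_ne_nil' hm) (by simp), setMul_comm]
    exact hA.1.setMul_subset hx

lemma mix_subset_ideal {A : Set G} (hA : IsCHyperideal A) {x y : G} {m n : ℕ}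
    (hm : 1 ≤ m) (hn : 1 ≤ n) (hx : hPow x m ⊆ A) (hy : hPow y n ⊆ A) :
    mix x y (m + n) ⊆ A := by
  classical
  rintro w ⟨l, hlen, hxy, hw⟩
  have hcount : l.length ≤ List.count x l + List.count y l := by
    clear hlen hw
    induction l with
    | nil => simp
    | cons a l ih =>
      have ha := hxy a (by simp)
      have ih' := ih fun b hb => hxy b (by simp [hb])
      have hx1 : List.count x l ≤ List.count x (a :: l) := by rw [List.count_cons]; omega
      have hy1 : List.count y l ≤ List.count y (a :: l) := by rw [List.count_cons]; omega
      rcases ha with ha | ha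
      · have : List.count x (a :: l) = List.count x l + 1 := by
          rw [ha]; exact List.count_cons_self
        simp only [List.length_cons]
        omega
      · have : List.count y (a :: l) = List.count y l + 1 := by
          rw [ha]; exact List.count_cons_self
        simp only [List.length_cons]
        omega
  rcases le_or_gt m (List.count x l) with h | h
  · exact hProd_subset_of_sublist hA hm hx (List.replicate_sublist_iff.mpr h) hw
  · have hny : n ≤ List.count y l := by omega
    exact hProd_subset_of_sublist hA hn hy (List.replicate_sublist_iff.mpr hny) hw

/-! ### Negation and powers -/

lemma smulSet_neg (a : G) (B : Set G) :
    smulSet (-a) B = (fun u => -u) '' smulSet a B := by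
  simp only [smulSet, neg_hmul, Set.image_iUnion]

lemma hmul_neg (a b : G) : hmul a (-b) = (fun u => -u) '' hmul a b := by
  rw [hmul_comm, neg_hmul, hmul_comm]

lemma smulSet_neg_image (a : G) (B : Set G) :
    smulSet (-a) ((fun u => -u) '' B) = smulSet a B := by
  ext z
  simp only [mem_smulSet]
  constructor
  · rintro ⟨b, ⟨b', hb', rfl⟩, hz⟩
    refine ⟨b', hb', ?_⟩
    rw [hmul_neg, neg_hmul] at hz
    obtain ⟨w, ⟨w', hw', rfl⟩, hzw⟩ := hz
    simpa [← hzw] using hw'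
  · rintro ⟨b, hb, hz⟩
    refine ⟨-b, ⟨b, hb, rfl⟩, ?_⟩
    rw [hmul_neg, neg_hmul]
    exact ⟨-z, ⟨z, hz, rfl⟩, by simp⟩

lemma neg_hPow {x : G} : ∀ n, 1 ≤ n →
    hPow (-x) n = hPow x n ∨ hPow (-x) n = (fun u => -u) '' hPow x n
  | 1, _ => by
    right
    rw [hPow_one, hPow_one]
    simp
  | n + 2, _ => by
    rcases neg_hPow (n + 1) (by omega) with h | h
    · right
      rw [hPow_succ (a := -x) (by omega), h, smulSet_neg, ← hPow_succ (by omega)]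
    · left
      rw [hPow_succ (a := -x) (by omega), h, smulSet_neg_image, ← hPow_succ (by omega)]

lemma neg_pow_subset {A : Set G} (hA : IsHyperideal A) {x : G} {n : ℕ} (hn : 1 ≤ n)
    (hx : hPow x n ⊆ A) : hPow (-x) n ⊆ A := by
  rcases neg_hPow (x := x) n hn with h | h
  · rw [h]; exact hx
  · rw [h]
    rintro z ⟨w, hw, rfl⟩
    exact hA.neg_mem (hx hw)

/-! ### rad is a hyperideal -/

lemma rad_isHyperideal {A : Set G} (hA : IsCHyperideal A) : IsHyperideal (rad A) := by
  refine ⟨⟨0, 1, le_refl 1, ?_⟩, ?_, ?_⟩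
  · rw [hPow_one]
    exact Set.singleton_subset_iff.mpr hA.1.zero_mem
  · rintro a ⟨m, hm, ha⟩ b ⟨n, hn, hb⟩
    have hnb : hPow (-b) n ⊆ A := neg_pow_subset hA.1 hn hb
    refine ⟨m + n, by omega, ?_⟩
    have h1 := binom a (-b) (m + n) (by omega)
    have h2 : mix a (-b) (m + n) ⊆ A := mix_subset_ideal hA hm hn ha hnb
    have h3 : hPow (a + -b) (m + n) ⊆ A := h1.trans (sums_subset_ideal hA.1 h2)
    rwa [← sub_eq_add_neg] at h3
  · rintro r x ⟨n, hn, hx⟩ z hz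
    refine ⟨n, hn, ?_⟩
    have h1 : hPow z n ⊆ hProd (repList n [r, x]) :=
      pow_subset_of_mem (by simp) (by rwa [hProd_pair]) n hn
    have h2 : hProd (repList n [r, x]) = setMul (hPow r n) (hPow x n) := by
      rw [hProd_perm (repList_pair_perm n r x),
        hProd_append (replicate_ne_nil' hn) (replicate_ne_nil' hn)]
      rfl
    refine h1.trans ?_
    rw [h2]
    exact hA.1.setMul_subset hx

/-! ### Interaction with MCS -/

lemma pow_inter_mcs {S : Set G} (hS : IsMCS S) {s : G} (hs : s ∈ S) :
    ∀ n, 1 ≤ n → (hPow s n ∩ S).Nonempty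
  | 1, _ => ⟨s, by rw [hPow_one]; exact rfl, hs⟩
  | n + 2, _ => by
    obtain ⟨w, hw, hwS⟩ := pow_inter_mcs hS hs (n + 1) (by omega)
    obtain ⟨z, hz, hzS⟩ := hS.2 s hs w hwS
    refine ⟨z, ?_, hzS⟩
    rw [hPow_succ (by omega)]
    exact mem_smulSet.mpr ⟨w, hw, hz⟩

/-! ### Key steps for the main theorem -/

lemma hmul_subset_of_mem_left {I : Set G} (hI : IsHyperideal I) {t t₁ t₂ a : G}
    (ht : t ∈ hmul t₁ t₂) (h : hmul t₁ a ⊆ I) : hmul t a ⊆ I := by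
  have h1 : hmul t a ⊆ setMul (hmul t₁ t₂) {a} := by
    rw [hmul_eq_setMul]
    exact setMul_mono (Set.singleton_subset_iff.mpr ht) subset_rfl
  refine h1.trans ?_
  rw [hmul_eq_setMul t₁ t₂, setMul_assoc, setMul_comm {t₂} {a}, ← setMul_assoc,
    ← hmul_eq_setMul, setMul_comm]
  exact hI.setMul_subset h

lemma step2 {A : Set G} (hA : IsCHyperideal A) {t u a : G} {n : ℕ} (hn : 1 ≤ n)
    (ha : a ∈ hPow u n) (h : hmul t a ⊆ rad A) : hmul t u ⊆ rad A := by
  have hradId := rad_isHyperideal hA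
  have hsm : setMul {t} (hPow u n) ⊆ rad A := by
    have heq : hProd (t :: List.replicate n u) = setMul {t} (hPow u n) :=
      hProd_cons (replicate_ne_nil' hn) t
    rw [← heq]
    apply rad_c hA (by simp)
    obtain ⟨z₀, hz₀⟩ := hmul_nonempty t a
    refine ⟨z₀, ?_, h hz₀⟩
    rw [heq]
    exact mem_setMul.mpr ⟨t, rfl, a, ha, hz₀⟩
  intro z hz
  apply rad_rad hA hn
  have h1 : hPow z n ⊆ hProd (repList n [t, u]) :=
    pow_subset_of_mem (by simp) (by rwa [hProd_pair]) n hn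
  refine h1.trans ?_
  rw [hProd_perm (repList_pair_perm n t u)]
  rcases eq_or_lt_of_le hn with h1' | h1'
  · subst h1'
    show hProd ([t] ++ [u]) ⊆ rad A
    rw [hProd_append (by simp) (by simp)]
    exact hsm
  · have heq : List.replicate n t = List.replicate (n - 1) t ++ [t] := by
      rw [show List.replicate n t = List.replicate ((n - 1) + 1) t by
        rw [show (n - 1) + 1 = n by omega], List.replicate_add]
      rfl
    have heq2 : List.replicate n t ++ List.replicate n u
        = List.replicate (n - 1) t ++ (t :: List.replicate n u) := by
      rw [heq, List.append_assoc]
      rfl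
    rw [heq2, hProd_append (replicate_ne_nil' (by omega)) (by simp),
      hProd_cons (replicate_ne_nil' hn) t]
    exact hradId.setMul_subset hsm

end MulHyperring

open MulHyperring in
theorem weaklyQuasiSPrimary_rad_sPrime {G : Type*} [MulHyperring G] (A S : Set G) (hA : IsCHyperideal A)
    (hS : IsMCS S) (hAS : A ∩ S = ∅)
    (hw : IsWeaklyQuasiSPrimary S A) (h0C : IsCHyperideal (idealGen {0} : Set G))
    (h0 : IsQuasiSPrimary S (idealGen {0} : Set G)) :
    IsSPrime S (rad A) := by
  obtain ⟨hAid, hwS, t₁, ht₁S, ht₁⟩ := hw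
  obtain ⟨h0id, h0S, t₂, ht₂S, ht₂⟩ := h0
  obtain ⟨t, htm, htS⟩ := hS.2 t₁ ht₁S t₂ ht₂S
  have hradId := rad_isHyperideal hA
  have hzero_sub : (idealGen {0} : Set G) ⊆ A :=
    Set.sInter_subset_of_mem ⟨hA.1, Set.singleton_subset_iff.mpr hA.1.zero_mem⟩
  have hrad0 : rad (idealGen {0} : Set G) ⊆ rad A := rad_mono hzero_sub
  have hzero_mem : (0 : G) ∈ (idealGen {0} : Set G) :=
    Set.mem_sInter.mpr fun B hB => hB.2 rfl
  refine ⟨hradId, ?_, t, htS, ?_⟩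
  · rw [Set.eq_empty_iff_forall_notMem]
    rintro s ⟨⟨n, hn, hsn⟩, hsS⟩
    obtain ⟨w, hw1, hw2⟩ := pow_inter_mcs hS hsS n hn
    have hcon : w ∈ A ∩ S := ⟨hsn hw1, hw2⟩
    rw [hAS] at hcon
    exact hcon
  · intro u v huv
    obtain ⟨w, hw⟩ := hmul_nonempty u v
    obtain ⟨n, hn, hwn⟩ := huv hw
    have hne : List.replicate n u ++ List.replicate n v ≠ [] := fun hc =>
      replicate_ne_nil' hn (List.append_eq_nil_iff.mp hc).1
    have hlist : hProd (List.replicate n u ++ List.replicate n v) ⊆ A := by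
      refine hA.2 _ hne ?_
      have h1 : hPow w n ⊆ hProd (repList n [u, v]) :=
        pow_subset_of_mem (by simp) (by rwa [hProd_pair]) n hn
      rw [← hProd_perm (repList_pair_perm n u v)]
      obtain ⟨y, hy⟩ := hProd_nonempty (replicate_ne_nil' hn (a := w))
      exact ⟨y, h1 hy, hwn hy⟩
    obtain ⟨a, ha⟩ := hProd_nonempty (replicate_ne_nil' hn (a := u))
    obtain ⟨b, hb⟩ := hProd_nonempty (replicate_ne_nil' hn (a := v))
    have hab : hmul a b ⊆ A := by
      intro z hz
      apply hlist
      rw [hProd_append (replicate_ne_nil' hn) (replicate_ne_nil' hn)]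
      exact mem_setMul.mpr ⟨a, ha, b, hb, hz⟩
    have key : (hmul t₁ a ⊆ rad A ∨ hmul t₁ b ⊆ rad A) ∨
        (hmul t₂ a ⊆ rad A ∨ hmul t₂ b ⊆ rad A) := by
      by_cases h0mem : (0 : G) ∈ hmul a b
      · have hab0 : hmul a b ⊆ (idealGen {0} : Set G) := by
          have h2 := h0C.2 [a, b] (by simp) ⟨0, by rw [hProd_pair]; exact h0mem, hzero_mem⟩
          rwa [hProd_pair] at h2
        rcases ht₂ a b hab0 with h | h
        · exact Or.inr (Or.inl (h.trans hrad0))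
        · exact Or.inr (Or.inr (h.trans hrad0))
      · rcases ht₁ a b h0mem hab with h | h
        · exact Or.inl (Or.inl h)
        · exact Or.inl (Or.inr h)
    rcases key with (h | h) | (h | h)
    · exact Or.inl (step2 hA hn ha (hmul_subset_of_mem_left hradId htm h))
    · exact Or.inr (step2 hA hn hb (hmul_subset_of_mem_left hradId htm h))
    · have htm2 : t ∈ hmul t₂ t₁ := by rwa [hmul_comm]
      exact Or.inl (step2 hA hn ha (hmul_subset_of_mem_left hradId htm2 h))
    · have htm2 : t ∈ hmul t₂ t₁ := by rwa [hmul_comm]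
      exact Or.inr (step2 hA hn hb (hmul_subset_of_mem_left hradId htm2 h))
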